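/- Let k ≥ 4 and n > (k+2)²/4. Then there is no primitive uniquely K_{n-1}^{(k)}-saturated hypergraph on n vertices. -/

import Mathlib

open Finset

/-- The edge set `E` is `k`-uniform. -/
def Uniform (n k : ℕ) (E : Finset (Finset (Fin n))) : Prop :=
  ∀ e ∈ E, e.card = k

/-- `H` contains a copy of the complete `k`-uniform hypergraph on `r` vertices. -/
def HasClique (n k r : ℕ) (E : Finset (Finset (Fin n))) : Prop :=
  ∃ Q : Finset (Fin n), Q.card = r ∧ ∀ T ⊆ Q, T.card = k → T ∈ E

/-- `H` is uniquely `K_r^(k)`-saturated: it has no `K_r^(k)`, and adding any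
non-edge `k`-set `S` creates exactly one copy of `K_r^(k)`. -/
def UniquelySat (n k r : ℕ) (E : Finset (Finset (Fin n))) : Prop :=
  ¬ HasClique n k r E ∧
  ∀ S : Finset (Fin n), S.card = k → S ∉ E →
    ∃! Q : Finset (Fin n), Q.card = r ∧ ∀ T ⊆ Q, T.card = k → (T ∈ E ∨ T = S)

/-- `H` has no dominating vertex. -/
def Primitive (n k : ℕ) (E : Finset (Finset (Fin n))) : Prop :=
  ¬ ∃ v : Fin n, ∀ S : Finset (Fin n), S.card = k → v ∈ S → S ∈ E

/-- `H` is a primitive uniquely `K_r^(k)`-saturated `k`-uniform hypergraph. -/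
def IsPUS (n k r : ℕ) (E : Finset (Finset (Fin n))) : Prop :=
  Uniform n k E ∧ UniquelySat n k r E ∧ Primitive n k E

theorem stmt13 (k n : ℕ) (hk : 4 ≤ k) (hn : (k + 2) ^ 2 < 4 * n) :
    ¬ ∃ E : Finset (Finset (Fin n)), IsPUS n k (n - 1) E := by
  rintro ⟨E, hUnif, ⟨hNoCl, hSat⟩, hPrim⟩
  have hn1 : 10 ≤ n := by nlinarith
  -- the complement hypergraph R of non-edges
  set R : Finset (Finset (Fin n)) := (univ.powersetCard k).filter (fun S => S ∉ E) with hRdef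
  have hmemR : ∀ S : Finset (Fin n), S ∈ R ↔ S.card = k ∧ S ∉ E := by
    intro S
    simp [hRdef, Finset.mem_powersetCard, Finset.subset_univ]
  rw [Primitive] at hPrim
  push_neg at hPrim
  -- every (n-1)-set is `univ.erase v` for some v
  have herase : ∀ Q : Finset (Fin n), Q.card = n - 1 → ∃ v, Q = univ.erase v := by
    intro Q hQ
    have hc : Qᶜ.card = 1 := by
      rw [Finset.card_compl, hQ]
      simp
      omega
    obtain ⟨v, hv⟩ := Finset.card_eq_one.mp hc
    refine ⟨v, ?_⟩
    rw [← compl_compl Q, hv, Finset.compl_singleton]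
  -- helper: if all non-edges avoiding w equal {S}, then erase w has the added-clique property
  have hback : ∀ (S : Finset (Fin n)) (w : Fin n), R.filter (fun T => w ∉ T) = {S} →
      ∀ T ⊆ univ.erase w, T.card = k → T ∈ E ∨ T = S := by
    intro S w hfil T hT hTk
    by_cases hTE : T ∈ E
    · exact Or.inl hTE
    · have hwT : w ∉ T := fun hwT => by simpa using hT hwT
      have : T ∈ R.filter (fun T => w ∉ T) := by
        simp only [Finset.mem_filter]
        exact ⟨(hmemR T).mpr ⟨hTk, hTE⟩, hwT⟩
      rw [hfil] at this
      exact Or.inr (Finset.mem_singleton.mp this)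
  -- key: each non-edge S has a unique vertex v with R_v = {S}
  have key : ∀ S ∈ R, ∃! v : Fin n, R.filter (fun T => v ∉ T) = {S} := by
    intro S hS
    obtain ⟨hSk, hSE⟩ := (hmemR S).mp hS
    obtain ⟨Q, ⟨hQcard, hQprop⟩, hQuniq⟩ := hSat S hSk hSE
    obtain ⟨v, rfl⟩ := herase Q hQcard
    have hvS : v ∉ S := by
      intro hvS
      apply hNoCl
      refine ⟨univ.erase v, hQcard, fun T hT hTk => ?_⟩
      rcases hQprop T hT hTk with h | rfl
      · exact h
      · exact absurd (hT hvS) (by simp)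
    have hfilv : R.filter (fun T => v ∉ T) = {S} := by
      ext T
      simp only [Finset.mem_filter, Finset.mem_singleton]
      constructor
      · rintro ⟨hTR, hvT⟩
        obtain ⟨hTk, hTE⟩ := (hmemR T).mp hTR
        have hTsub : T ⊆ univ.erase v := fun a ha =>
          Finset.mem_erase.mpr ⟨fun h => hvT (h ▸ ha), Finset.mem_univ a⟩
        rcases hQprop T hTsub hTk with h | h
        · exact absurd h hTE
        · exact h
      · rintro rfl
        exact ⟨hS, hvS⟩
    refine ⟨v, hfilv, fun w hw => ?_⟩
    have hwcard : (univ.erase w).card = n - 1 := by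
      rw [Finset.card_erase_of_mem (Finset.mem_univ w), Finset.card_univ, Fintype.card_fin]
    have := hQuniq (univ.erase w) ⟨hwcard, hback S w hw⟩
    have hwin : w ∉ univ.erase v := this ▸ Finset.notMem_erase w univ
    by_contra hne
    exact hwin (Finset.mem_erase.mpr ⟨hne, Finset.mem_univ w⟩)
  -- the set A of vertices whose complement link is a singleton
  set A : Finset (Fin n) := univ.filter (fun v => ∃ S, R.filter (fun T => v ∉ T) = {S})
    with hAdef
  have hAcard : R.card = A.card := by
    refine Finset.card_bij (fun S hS => (key S hS).choose) ?_ ?_ ?_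
    · intro S hS
      simp only [hAdef, Finset.mem_filter, Finset.mem_univ, true_and]
      exact ⟨S, (key S hS).choose_spec.1⟩
    · intro S₁ hS₁ S₂ hS₂ h
      have h1 := (key S₁ hS₁).choose_spec.1
      have h2 := (key S₂ hS₂).choose_spec.1
      simp only at h h1 h2
      rw [h] at h1
      rw [h1] at h2
      exact Finset.singleton_inj.mp h2
    · intro v hv
      simp only [hAdef, Finset.mem_filter, Finset.mem_univ, true_and] at hv
      obtain ⟨S, hfil⟩ := hv
      have hSR : S ∈ R := by
        have : S ∈ R.filter (fun T => v ∉ T) := hfil ▸ Finset.mem_singleton_self S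
        exact (Finset.mem_filter.mp this).1
      exact ⟨S, hSR, ((key S hSR).choose_spec.2 v hfil).symm⟩
  set x := R.card with hxdef
  -- double counting incidences
  have hdc : ∑ v : Fin n, (R.filter (fun S => v ∈ S)).card = x * k := by
    have h1 : ∑ v : Fin n, (R.filter (fun S => v ∈ S)).card = ∑ S ∈ R, S.card := by
      simp only [Finset.card_filter]
      rw [Finset.sum_comm]
      refine Finset.sum_congr rfl fun S _ => ?_
      rw [← Finset.card_filter]
      congr 1
      exact Finset.filter_univ_mem S
    rw [h1]
    rw [Finset.sum_congr rfl fun S hS => ((hmemR S).mp hS).1]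
    simp [mul_comm, ← hxdef]
  -- each vertex is in at least one non-edge (primitivity)
  have hone : ∀ v : Fin n, 1 ≤ (R.filter (fun S => v ∈ S)).card := by
    intro v
    obtain ⟨S, hSk, hvS, hSE⟩ := hPrim v
    refine Finset.card_pos.mpr ⟨S, ?_⟩
    simp only [Finset.mem_filter]
    exact ⟨(hmemR S).mpr ⟨hSk, hSE⟩, hvS⟩
  -- each vertex of A is in at least x - 1 non-edges
  have hmany : ∀ v ∈ A, x - 1 ≤ (R.filter (fun S => v ∈ S)).card := by
    intro v hv
    simp only [hAdef, Finset.mem_filter, Finset.mem_univ, true_and] at hv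
    obtain ⟨S, hfil⟩ := hv
    have hSR : S ∈ R := by
      have : S ∈ R.filter (fun T => v ∉ T) := hfil ▸ Finset.mem_singleton_self S
      exact (Finset.mem_filter.mp this).1
    have hsub : R \ {S} ⊆ R.filter (fun T => v ∈ T) := by
      intro T hT
      obtain ⟨hTR, hTS⟩ := Finset.mem_sdiff.mp hT
      simp only [Finset.mem_singleton] at hTS
      by_contra h
      simp only [Finset.mem_filter, not_and] at h
      have hvT : v ∉ T := h hTR
      have : T ∈ R.filter (fun T => v ∉ T) := Finset.mem_filter.mpr ⟨hTR, hvT⟩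
      rw [hfil] at this
      exact hTS (Finset.mem_singleton.mp this)
    calc x - 1 = (R \ {S}).card := by
          rw [Finset.card_sdiff_of_subset (Finset.singleton_subset_iff.mpr hSR), Finset.card_singleton]
      _ ≤ _ := Finset.card_le_card hsub
  have hxn : x ≤ n := by
    rw [hAcard]
    simpa using Finset.card_le_univ A
  have hx1 : 1 ≤ x := by
    obtain ⟨S, hSk, _, hSE⟩ := hPrim ⟨0, by omega⟩
    exact Finset.card_pos.mpr ⟨S, (hmemR S).mpr ⟨hSk, hSE⟩⟩
  -- sum the lower bounds
  have hsplit : ∑ v ∈ A, (R.filter (fun S => v ∈ S)).card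
      + ∑ v ∈ Aᶜ, (R.filter (fun S => v ∈ S)).card = x * k := by
    rw [Finset.sum_add_sum_compl]
    exact hdc
  have hlow1 : A.card * (x - 1) ≤ ∑ v ∈ A, (R.filter (fun S => v ∈ S)).card := by
    calc A.card * (x - 1) = ∑ _v ∈ A, (x - 1) := by rw [Finset.sum_const, smul_eq_mul]
      _ ≤ _ := Finset.sum_le_sum hmany
  have hlow2 : n - x ≤ ∑ v ∈ Aᶜ, (R.filter (fun S => v ∈ S)).card := by
    have hcc : Aᶜ.card = n - x := by
      rw [Finset.card_compl, Fintype.card_fin, ← hAcard]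
    calc n - x = ∑ _v ∈ Aᶜ, 1 := by rw [Finset.sum_const, smul_eq_mul, mul_one, hcc]
      _ ≤ _ := Finset.sum_le_sum fun v _ => hone v
  have hmain : x * (x - 1) + (n - x) ≤ x * k := by
    rw [← hsplit]
    exact Nat.add_le_add (hAcard ▸ hlow1) hlow2
  -- final arithmetic contradiction
  clear_value x
  obtain ⟨y, rfl⟩ : ∃ y, x = y + 1 := ⟨x - 1, by omega⟩
  obtain ⟨m, hm⟩ : ∃ m, n = (y + 1) + m := ⟨n - (y + 1), by omega⟩
  have hmain' : (y + 1) * y + m ≤ (y + 1) * k := by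
    simpa [hm] using hmain
  have hfin : (k + 2) ^ 2 < 4 * ((y + 1) + m) := by rw [← hm]; exact hn
  have hy : ((y : ℤ) + 1) * y + m ≤ ((y : ℤ) + 1) * k := by exact_mod_cast hmain'
  have hf : ((k : ℤ) + 2) ^ 2 < 4 * (((y : ℤ) + 1) + m) := by exact_mod_cast hfin
  nlinarith [sq_nonneg ((k : ℤ) - 2 * y)]
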